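/- For every natuarl number n ≥ 0 and every integer i with 0 ≤ i ≤ n, the coefficient a(n,i) of q^i in the polynomial (q;q)_n = ∏_{k=1}^n (1 - q^k) equals (-1)^j if i = j(3j-1)/2 or i = j(3j+1)/2 for some natural number j, and equals 0 otherwise. (In particular, the first n coefficients of (q;q)_n agree with the series in Euler's pentagonal number theorem.) -/

import Mathlib

open Polynomial

/-- `a n i` is the coefficient of `q^i` in `(q;q)_n = ∏_{k=1}^n (1 - q^k)` over `ℤ`. -/
noncomputable def a (n i : ℕ) : ℤ :=
  (∏ k ∈ Finset.Icc 1 n, (1 - (X : Polynomial ℤ) ^ k)).coeff i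

/-- `M n` is the maximum of `|a n i|` over `0 ≤ i ≤ n(n+1)/2`. -/
noncomputable def M (n : ℕ) : ℕ :=
  (Finset.range (n * (n + 1) / 2 + 1)).sup fun i => (a n i).natAbs

/-- `L n` is the least index `i` with `|a n i| = M n`. -/
noncomputable def L (n : ℕ) : ℕ :=
  sInf {i : ℕ | (a n i).natAbs = M n}


namespace PNT
open Finset

/-- distinct partitions of `i` -/
def D (i : ℕ) : Finset (Finset ℕ) :=
  (Finset.Icc 1 i).powerset.filter (fun S => ∑ x ∈ S, x = i)

lemma mem_powerset_filter {N i : ℕ} (hiN : i ≤ N) (S : Finset ℕ) :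
    (S ∈ (Finset.Icc 1 N).powerset.filter (fun T => ∑ x ∈ T, x = i)) ↔
      (0 ∉ S ∧ ∑ x ∈ S, x = i) := by
  simp only [mem_filter, mem_powerset]
  constructor
  · rintro ⟨hsub, hsum⟩
    refine ⟨fun h0 => ?_, hsum⟩
    have := hsub h0
    simp at this
  · rintro ⟨h0, hsum⟩
    refine ⟨fun x hx => ?_, hsum⟩
    have hx1 : 1 ≤ x := Nat.one_le_iff_ne_zero.2 (fun h => h0 (h ▸ hx))
    have hxi : x ≤ i := hsum ▸ Finset.single_le_sum (f := fun x => x) (fun _ _ => Nat.zero_le _) hx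
    exact Finset.mem_Icc.2 ⟨hx1, le_trans hxi hiN⟩

lemma mem_D {i : ℕ} {S : Finset ℕ} : S ∈ D i ↔ (0 ∉ S ∧ ∑ x ∈ S, x = i) :=
  mem_powerset_filter le_rfl S

lemma a_eq {n i : ℕ} (hi : i ≤ n) : a n i = ∑ S ∈ D i, (-1 : ℤ) ^ S.card := by
  have expand : (∏ k ∈ Finset.Icc 1 n, (1 - (X : Polynomial ℤ) ^ k)) =
      ∑ T ∈ (Finset.Icc 1 n).powerset, C ((-1 : ℤ) ^ T.card) * X ^ (∑ x ∈ T, x) := by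
    rw [Finset.prod_sub (fun _ => (1 : Polynomial ℤ)) (fun k => X ^ k)]
    refine Finset.sum_congr rfl fun T hT => ?_
    rw [Finset.prod_const_one, Finset.prod_pow_eq_pow_sum]
    simp only [map_pow, map_neg, map_one]
    ring
  rw [a, expand, Polynomial.finset_sum_coeff]
  have : ∀ T ∈ (Finset.Icc 1 n).powerset,
      (C ((-1 : ℤ) ^ T.card) * X ^ (∑ x ∈ T, x)).coeff i =
        if (∑ x ∈ T, x) = i then (-1 : ℤ) ^ T.card else 0 := by
    intro T _
    rw [Polynomial.coeff_C_mul, Polynomial.coeff_X_pow]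
    by_cases h : (∑ x ∈ T, x) = i
    · simp [h]
    · rw [if_neg h, if_neg (fun hh => h hh.symm), mul_zero]
  rw [Finset.sum_congr rfl this, ← Finset.sum_filter]
  apply Finset.sum_congr _ (fun _ _ => rfl)
  ext S
  rw [mem_powerset_filter hi S, ← mem_D, D]

/-- staircase length at the top -/
def stair (S : Finset ℕ) (M : ℕ) : ℕ :=
  Nat.findGreatest (fun t => Finset.Icc (M + 1 - t) M ⊆ S) M

section Stair

variable {S : Finset ℕ} {M : ℕ} (h0 : 0 ∉ S) (hM : M ∈ S)
include h0 hM

lemma max_pos : 1 ≤ M := Nat.one_le_iff_ne_zero.2 (fun h => h0 (h ▸ hM))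

lemma stair_one_le : 1 ≤ stair S M := by
  apply Nat.le_findGreatest (P := fun t => Finset.Icc (M + 1 - t) M ⊆ S) (max_pos h0 hM)
  intro x hx
  rw [Finset.mem_Icc] at hx
  have : x = M := by omega
  exact this ▸ hM

lemma stair_le_max : stair S M ≤ M := Nat.findGreatest_le _

lemma stair_subset : Finset.Icc (M + 1 - stair S M) M ⊆ S := by
  have := Nat.findGreatest_spec (P := fun t => Finset.Icc (M + 1 - t) M ⊆ S)
    (max_pos h0 hM) (m := 1) ?_
  · exact this
  · intro x hx
    rw [Finset.mem_Icc] at hx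
    have : x = M := by omega
    exact this ▸ hM

lemma stair_bot_mem : M + 1 - stair S M ∈ S := by
  apply stair_subset h0 hM
  rw [Finset.mem_Icc]
  have := stair_one_le h0 hM
  have := stair_le_max h0 hM
  omega

lemma stair_notmem : M - stair S M ∉ S := by
  rcases eq_or_lt_of_le (stair_le_max h0 hM (S := S)) with he | hlt
  · rw [he]; simpa using h0
  · intro hmem
    have hng := Nat.findGreatest_is_greatest (Nat.lt_succ_self (stair S M))
      (by omega : stair S M + 1 ≤ M)
    apply hng
    have heq : M + 1 - (stair S M + 1) = M - stair S M := by omega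
    rw [heq]
    have : insert (M - stair S M) (Finset.Icc (M - stair S M + 1) M) =
        Finset.Icc (M - stair S M) M := Finset.insert_Icc_add_one_left_eq_Icc (by omega)
    rw [← this]
    apply Finset.insert_subset hmem
    have : M - stair S M + 1 = M + 1 - stair S M := by
      have := stair_le_max h0 hM (S := S); omega
    rw [this]
    exact stair_subset h0 hM

lemma stair_eq_of {t : ℕ} (h1 : 1 ≤ t) (hlt : t ≤ M)
    (hsub : Finset.Icc (M + 1 - t) M ⊆ S) (hnm : M - t ∉ S) : stair S M = t := by
  refine le_antisymm ?_ (Nat.le_findGreatest hlt hsub)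
  by_contra hc
  push_neg at hc
  apply hnm
  apply stair_subset h0 hM
  rw [Finset.mem_Icc]
  have := stair_le_max h0 hM (S := S)
  omega

end Stair

/-- Franklin's involution -/
def g (S : Finset ℕ) : Finset ℕ :=
  if h : S.Nonempty then
    if S.min' h ≤ stair S (S.max' h) then
      insert (S.max' h + 1) ((S.erase (S.min' h)).erase (S.max' h + 1 - S.min' h))
    else
      insert (stair S (S.max' h))
        (insert (S.max' h - stair S (S.max' h)) (S.erase (S.max' h)))
  else ∅

/-- exceptional (pentagonal) partitions -/
def Exc (S : Finset ℕ) : Prop :=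
  ∃ j : ℕ, 1 ≤ j ∧ (S = Finset.Icc j (2 * j - 1) ∨ S = Finset.Icc (j + 1) (2 * j))

lemma caseA {S : Finset ℕ} (h0 : 0 ∉ S) (hne : S.Nonempty) (hexc : ¬ Exc S)
    (hA : S.min' hne ≤ stair S (S.max' hne)) :
    0 ∉ g S ∧ (∑ x ∈ g S, x) = (∑ x ∈ S, x) ∧ S.card = (g S).card + 1 ∧
      ¬ Exc (g S) ∧ g (g S) = S := by
  set M := S.max' hne with hMdef
  set m := S.min' hne with hmdef
  set s := stair S M with hsdef
  have hMS : M ∈ S := S.max'_mem hne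
  have hmS : m ∈ S := S.min'_mem hne
  have hm1 : 1 ≤ m := Nat.one_le_iff_ne_zero.2 (fun h => h0 (h ▸ hmS))
  have hs1 : 1 ≤ s := stair_one_le h0 hMS
  have hsM : s ≤ M := stair_le_max h0 hMS
  have hsub : Finset.Icc (M + 1 - s) M ⊆ S := stair_subset h0 hMS
  have hbot : M + 1 - s ∈ S := stair_bot_mem h0 hMS
  have hmbot : m ≤ M + 1 - s := S.min'_le _ hbot
  have hub : ∀ x ∈ S, x ≤ M := fun x hx => S.le_max' x hx
  have hlb : ∀ x ∈ S, m ≤ x := fun x hx => S.min'_le x hx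
  have h2m : 2 * m ≤ M := by
    by_contra hc
    push_neg at hc
    have heq1 : m = M + 1 - s := by omega
    have hSeq : S = Finset.Icc m M := by
      apply subset_antisymm (fun x hx => Finset.mem_Icc.2 ⟨hlb x hx, hub x hx⟩)
      rw [heq1]; exact hsub
    exact hexc ⟨m, hm1, Or.inl (by rw [hSeq]; congr 1; omega)⟩
  have hbS : M + 1 - m ∈ S := hsub (Finset.mem_Icc.2 ⟨by omega, by omega⟩)
  set S' := insert (M + 1) ((S.erase m).erase (M + 1 - m)) with hS'def
  have hgS : g S = S' := by rw [g, dif_pos hne, if_pos hA]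
  have hM1notin : M + 1 ∉ (S.erase m).erase (M + 1 - m) := fun h => by
    have := hub _ (Finset.mem_of_mem_erase (Finset.mem_of_mem_erase h)); omega
  have hbmem : M + 1 - m ∈ S.erase m := Finset.mem_erase.2 ⟨by omega, hbS⟩
  have hcard2 : 1 < S.card := Finset.one_lt_card.2 ⟨m, hmS, M + 1 - m, hbS, by omega⟩
  have hcard : S.card = S'.card + 1 := by
    rw [hS'def, Finset.card_insert_of_notMem hM1notin,
        Finset.card_erase_of_mem hbmem, Finset.card_erase_of_mem hmS]
    omega
  have hsum : (∑ x ∈ S', x) = ∑ x ∈ S, x := by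
    have e1 : ∑ x ∈ S.erase m, x + m = ∑ x ∈ S, x :=
      Finset.sum_erase_add _ _ hmS
    have e2 : ∑ x ∈ (S.erase m).erase (M + 1 - m), x + (M + 1 - m) = ∑ x ∈ S.erase m, x :=
      Finset.sum_erase_add _ _ hbmem
    rw [hS'def, Finset.sum_insert hM1notin]
    omega
  have hmemS' : ∀ x, x ∈ S' ↔ (x = M + 1 ∨ (x ∈ S ∧ x ≠ m ∧ x ≠ M + 1 - m)) := by
    intro x
    simp only [hS'def, Finset.mem_insert, Finset.mem_erase]
    tauto
  have h0' : 0 ∉ S' := fun h => by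
    rcases (hmemS' 0).1 h with h | h
    · omega
    · exact h0 h.1
  have hM1S' : M + 1 ∈ S' := (hmemS' _).2 (Or.inl rfl)
  have hne' : S'.Nonempty := ⟨M + 1, hM1S'⟩
  have hmax' : S'.max' hne' = M + 1 := by
    apply le_antisymm
    · apply Finset.max'_le
      intro x hx
      rcases (hmemS' x).1 hx with h | h
      · omega
      · exact le_trans (hub _ h.1) (by omega)
    · exact Finset.le_max' _ _ hM1S'
  have hminlt : m < S'.min' hne' := by
    have hm' := S'.min'_mem hne'
    rcases (hmemS' _).1 hm' with h | h
    · omega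
    · have := hlb _ h.1
      omega
  have hstair' : stair S' (M + 1) = m := by
    apply stair_eq_of h0' hM1S' hm1 (by omega)
    · intro x hx
      rw [Finset.mem_Icc] at hx
      rcases eq_or_lt_of_le hx.2 with he | hlt2
      · exact (hmemS' _).2 (Or.inl he)
      · apply (hmemS' _).2
        exact Or.inr ⟨hsub (Finset.mem_Icc.2 ⟨by omega, by omega⟩), by omega, by omega⟩
    · intro h
      rcases (hmemS' _).1 h with h | h
      · omega
      · exact h.2.2 rfl
  have hexc' : ¬ Exc S' := by
    rintro ⟨j, hj1, hj | hj⟩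
    · have hjmem : j ∈ S' := by rw [hj]; exact Finset.mem_Icc.2 ⟨le_rfl, by omega⟩
      have htop : 2 * j - 1 ∈ S' := by rw [hj]; exact Finset.mem_Icc.2 ⟨by omega, le_rfl⟩
      have hM1le : M + 1 ≤ 2 * j - 1 := by
        have := (hmemS' _).1 hM1S'
        have h2 := hM1S'
        rw [hj, Finset.mem_Icc] at h2
        omega
      have htople : 2 * j - 1 ≤ M + 1 := by
        have : 2 * j - 1 ≤ S'.max' hne' := Finset.le_max' _ _ htop
        omega
      have h2jm : 2 * j - 1 = M + 1 := le_antisymm htople hM1le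
      have hst : stair S' (M + 1) = j := by
        apply stair_eq_of h0' hM1S' hj1 (by omega)
        · intro x hx
          rw [Finset.mem_Icc] at hx
          rw [hj, Finset.mem_Icc]
          omega
        · rw [hj, Finset.mem_Icc]
          omega
      have : S'.min' hne' ≤ j := Finset.min'_le _ _ hjmem
      rw [hstair'] at hst
      omega
    · have hjmem : j + 1 ∈ S' := by rw [hj]; exact Finset.mem_Icc.2 ⟨le_rfl, by omega⟩
      have htop : 2 * j ∈ S' := by rw [hj]; exact Finset.mem_Icc.2 ⟨by omega, le_rfl⟩
      have hM1le : M + 1 ≤ 2 * j := by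
        have h2 := hM1S'
        rw [hj, Finset.mem_Icc] at h2
        omega
      have htople : 2 * j ≤ M + 1 := by
        have : 2 * j ≤ S'.max' hne' := Finset.le_max' _ _ htop
        omega
      have h2jm : 2 * j = M + 1 := le_antisymm htople hM1le
      have hst : stair S' (M + 1) = j := by
        apply stair_eq_of h0' hM1S' hj1 (by omega)
        · intro x hx
          rw [Finset.mem_Icc] at hx
          rw [hj, Finset.mem_Icc]
          omega
        · rw [hj, Finset.mem_Icc]
          omega
      rw [hstair'] at hst
      omega
  have hgg : g S' = S := by
    have hB' : ¬ (S'.min' hne' ≤ stair S' (S'.max' hne')) := by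
      rw [hmax', hstair']
      omega
    rw [g, dif_pos hne', if_neg hB', hmax', hstair']
    have he1 : S'.erase (M + 1) = (S.erase m).erase (M + 1 - m) := by
      rw [hS'def, Finset.erase_insert hM1notin]
    rw [he1]
    have he2 : M + 1 - m ∈ (S.erase m) := hbmem
    rw [Finset.insert_erase he2, Finset.insert_erase hmS]
  rw [hgS]
  exact ⟨h0', hsum, hcard, hexc', hgg⟩

lemma caseB {S : Finset ℕ} (h0 : 0 ∉ S) (hne : S.Nonempty) (hexc : ¬ Exc S)
    (hB : ¬ S.min' hne ≤ stair S (S.max' hne)) :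
    0 ∉ g S ∧ (∑ x ∈ g S, x) = (∑ x ∈ S, x) ∧ (g S).card = S.card + 1 ∧
      ¬ Exc (g S) ∧ g (g S) = S := by
  set M := S.max' hne with hMdef
  set m := S.min' hne with hmdef
  set s := stair S M with hsdef
  push_neg at hB
  have hMS : M ∈ S := S.max'_mem hne
  have hmS : m ∈ S := S.min'_mem hne
  have hm1 : 1 ≤ m := Nat.one_le_iff_ne_zero.2 (fun h => h0 (h ▸ hmS))
  have hs1 : 1 ≤ s := stair_one_le h0 hMS
  have hsM : s ≤ M := stair_le_max h0 hMS
  have hsub : Finset.Icc (M + 1 - s) M ⊆ S := stair_subset h0 hMS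
  have hbot : M + 1 - s ∈ S := stair_bot_mem h0 hMS
  have hmbot : m ≤ M + 1 - s := S.min'_le _ hbot
  have hub : ∀ x ∈ S, x ≤ M := fun x hx => S.le_max' x hx
  have hlb : ∀ x ∈ S, m ≤ x := fun x hx => S.min'_le x hx
  have hnotmem : M - s ∉ S := stair_notmem h0 hMS
  have h2s : 2 * s < M := by
    rcases lt_or_ge (2 * s) M with h | h
    · exact h
    · exfalso
      have hm_eq : m = M + 1 - s := by omega
      have hSeq : S = Finset.Icc (s + 1) (2 * s) := by
        apply subset_antisymm (fun x hx => Finset.mem_Icc.2 ⟨by have := hlb x hx; omega,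
          by have := hub x hx; omega⟩)
        intro x hx
        apply hsub
        rw [Finset.mem_Icc] at hx ⊢
        omega
      exact hexc ⟨s, hs1, Or.inr hSeq⟩
  have hsnotin : s ∉ S := fun h => by have := hlb _ h; omega
  set S' := insert s (insert (M - s) (S.erase M)) with hS'def
  have hgS : g S = S' := by
    rw [g, dif_pos hne, if_neg (by rw [← hMdef, ← hmdef, ← hsdef]; omega)]
  have hmemS' : ∀ x, x ∈ S' ↔ (x = s ∨ x = M - s ∨ (x ∈ S ∧ x ≠ M)) := by
    intro x
    simp only [hS'def, Finset.mem_insert, Finset.mem_erase]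
    tauto
  have hMsnotin : M - s ∉ S.erase M := fun h => hnotmem (Finset.mem_of_mem_erase h)
  have hsnotin' : s ∉ insert (M - s) (S.erase M) := by
    rw [Finset.mem_insert]
    rintro (h | h)
    · omega
    · exact hsnotin (Finset.mem_of_mem_erase h)
  have hcard : S'.card = S.card + 1 := by
    rw [hS'def, Finset.card_insert_of_notMem hsnotin',
        Finset.card_insert_of_notMem hMsnotin, Finset.card_erase_of_mem hMS]
    have : 1 ≤ S.card := Finset.card_pos.2 hne
    omega
  have hsum : (∑ x ∈ S', x) = ∑ x ∈ S, x := by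
    have e1 : ∑ x ∈ S.erase M, x + M = ∑ x ∈ S, x :=
      Finset.sum_erase_add _ _ hMS
    rw [hS'def, Finset.sum_insert hsnotin', Finset.sum_insert hMsnotin]
    omega
  have h0' : 0 ∉ S' := fun h => by
    rcases (hmemS' 0).1 h with h | h | h
    · omega
    · omega
    · exact h0 h.1
  have hsS' : s ∈ S' := (hmemS' _).2 (Or.inl rfl)
  have hne' : S'.Nonempty := ⟨s, hsS'⟩
  have hM1S' : M - 1 ∈ S' := by
    apply (hmemS' _).2
    rcases eq_or_lt_of_le hs1 with he | hlt
    · exact Or.inr (Or.inl (by omega))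
    · refine Or.inr (Or.inr ⟨hsub (Finset.mem_Icc.2 ⟨by omega, by omega⟩), by omega⟩)
  have hmax' : S'.max' hne' = M - 1 := by
    apply le_antisymm
    · apply Finset.max'_le
      intro x hx
      rcases (hmemS' x).1 hx with h | h | h
      · omega
      · omega
      · have := hub _ h.1; omega
    · exact Finset.le_max' _ _ hM1S'
  have hmin' : S'.min' hne' = s := by
    apply le_antisymm (Finset.min'_le _ _ hsS')
    apply Finset.le_min'
    intro x hx
    rcases (hmemS' x).1 hx with h | h | h
    · omega
    · omega
    · have := hlb _ h.1; omega
  have hstairge : s ≤ stair S' (M - 1) := by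
    apply Nat.le_findGreatest (by omega)
    intro x hx
    rw [Finset.mem_Icc] at hx
    apply (hmemS' x).2
    rcases eq_or_ne x (M - s) with he | hne2
    · exact Or.inr (Or.inl he)
    · exact Or.inr (Or.inr ⟨hsub (Finset.mem_Icc.2 ⟨by omega, by omega⟩), by omega⟩)
  have hexc' : ¬ Exc S' := by
    rintro ⟨j, hj1, hj | hj⟩
    · have hjmem : j ∈ S' := by rw [hj]; exact Finset.mem_Icc.2 ⟨le_rfl, by omega⟩
      have htop : 2 * j - 1 ∈ S' := by rw [hj]; exact Finset.mem_Icc.2 ⟨by omega, le_rfl⟩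
      have h1 : s ≤ j := by
        have := Finset.min'_le _ _ hjmem
        omega
      have h2 : j ≤ s := by
        have := hsS'
        rw [hj, Finset.mem_Icc] at this
        omega
      have h3 : 2 * j - 1 ≤ M - 1 := by
        have := Finset.le_max' _ _ htop; omega
      have h4 : M - 1 ≤ 2 * j - 1 := by
        have := hM1S'
        rw [hj, Finset.mem_Icc] at this
        omega
      omega
    · have hjmem : j + 1 ∈ S' := by rw [hj]; exact Finset.mem_Icc.2 ⟨le_rfl, by omega⟩
      have htop : 2 * j ∈ S' := by rw [hj]; exact Finset.mem_Icc.2 ⟨by omega, le_rfl⟩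
      have h1 : s ≤ j + 1 := by
        have := Finset.min'_le _ _ hjmem
        omega
      have h2 : j + 1 ≤ s := by
        have := hsS'
        rw [hj, Finset.mem_Icc] at this
        omega
      have h3 : 2 * j ≤ M - 1 := by
        have := Finset.le_max' _ _ htop; omega
      have h4 : M - 1 ≤ 2 * j := by
        have := hM1S'
        rw [hj, Finset.mem_Icc] at this
        omega
      have hMj : M = 2 * j + 1 := by omega
      have hst : stair S' (M - 1) = j := by
        apply stair_eq_of h0' hM1S' hj1 (by omega)
        · intro x hx
          rw [Finset.mem_Icc] at hx
          rw [hj, Finset.mem_Icc]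
          omega
        · rw [hj, Finset.mem_Icc]
          omega
      omega
  have hgg : g S' = S := by
    have hA' : S'.min' hne' ≤ stair S' (S'.max' hne') := by
      rw [hmin', hmax']
      exact hstairge
    rw [g, dif_pos hne', if_pos hA', hmin', hmax']
    have hr1 : M - 1 + 1 = M := by omega
    rw [hr1]
    have he1 : S'.erase s = insert (M - s) (S.erase M) := by
      rw [hS'def, Finset.erase_insert hsnotin']
    rw [he1, Finset.erase_insert hMsnotin, Finset.insert_erase hMS]
  rw [hgS]
  exact ⟨h0', hsum, hcard, hexc', hgg⟩

lemma key {S : Finset ℕ} (h0 : 0 ∉ S) (hne : S.Nonempty) (hexc : ¬ Exc S) :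
    0 ∉ g S ∧ (∑ x ∈ g S, x) = (∑ x ∈ S, x) ∧
      ((-1 : ℤ) ^ (g S).card = -(-1 : ℤ) ^ S.card) ∧ ¬ Exc (g S) ∧ g (g S) = S ∧ g S ≠ S := by
  by_cases hA : S.min' hne ≤ stair S (S.max' hne)
  · obtain ⟨h1, h2, h3, h4, h5⟩ := caseA h0 hne hexc hA
    refine ⟨h1, h2, ?_, h4, h5, fun h => by rw [h] at h3; omega⟩
    rw [h3, pow_succ]; ring
  · obtain ⟨h1, h2, h3, h4, h5⟩ := caseB h0 hne hexc hA
    refine ⟨h1, h2, ?_, h4, h5, fun h => by rw [h] at h3; omega⟩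
    rw [h3, pow_succ]; ring


lemma sum_Icc_two_mul (a c : ℕ) :
    2 * (∑ x ∈ Finset.Icc a (a + c), x) = (2 * a + c) * (c + 1) := by
  induction c with
  | zero => simp [mul_comm]
  | succ c ih =>
    have h1 : Finset.Icc a (a + (c + 1)) = insert (a + c + 1) (Finset.Icc a (a + c)) := by
      rw [show a + (c + 1) = (a + c) + 1 by ring, Finset.insert_Icc_right_eq_Icc_add_one (by omega)]
    rw [h1, Finset.sum_insert (by rw [Finset.mem_Icc]; omega)]
    zify at ih ⊢
    linear_combination ih

lemma sum_exc1 {j : ℕ} (hj : 1 ≤ j) :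
    2 * (∑ x ∈ Finset.Icc j (2 * j - 1), x) = j * (3 * j - 1) := by
  obtain ⟨k, rfl⟩ : ∃ k, j = k + 1 := ⟨j - 1, by omega⟩
  have h1 : 2 * (k + 1) - 1 = (k + 1) + k := by omega
  have h2 : 3 * (k + 1) - 1 = 3 * k + 2 := by omega
  rw [h1, sum_Icc_two_mul, h2]
  ring

lemma sum_exc2 (j : ℕ) :
    2 * (∑ x ∈ Finset.Icc (j + 1) (2 * j), x) = j * (3 * j + 1) := by
  cases j with
  | zero => simp
  | succ k =>
    have h1 : 2 * (k + 1) = (k + 1 + 1) + k := by omega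
    rw [h1, sum_Icc_two_mul]
    ring

lemma card_exc1 {j : ℕ} (hj : 1 ≤ j) : (Finset.Icc j (2 * j - 1)).card = j := by
  rw [Nat.card_Icc]; omega

lemma card_exc2 (j : ℕ) : (Finset.Icc (j + 1) (2 * j)).card = j := by
  rw [Nat.card_Icc]; omega

lemma fact1 {j k : ℕ} (h : j * (3 * j - 1) = k * (3 * k - 1)) : j = k := by
  rcases Nat.eq_zero_or_pos j with rfl | hj
  · simp at h
    rcases h with h' | h' <;> omega
  rcases Nat.eq_zero_or_pos k with rfl | hk
  · simp at h
    rcases h with h' | h' <;> omega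
  obtain ⟨t, rfl⟩ : ∃ t, j = t + 1 := ⟨j - 1, by omega⟩
  obtain ⟨u, rfl⟩ : ∃ u, k = u + 1 := ⟨k - 1, by omega⟩
  rw [show 3 * (t + 1) - 1 = 3 * t + 2 by omega, show 3 * (u + 1) - 1 = 3 * u + 2 by omega] at h
  zify at h ⊢
  rcases lt_trichotomy t u with hlt | heq | hlt
  · exfalso; have : (t : ℤ) + 1 ≤ u := by exact_mod_cast hlt
    nlinarith
  · omega
  · exfalso; have : (u : ℤ) + 1 ≤ t := by exact_mod_cast hlt
    nlinarith

lemma fact2 {j k : ℕ} (h : j * (3 * j + 1) = k * (3 * k + 1)) : j = k := by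
  zify at h ⊢
  rcases lt_trichotomy j k with hlt | heq | hlt
  · exfalso; have : (j : ℤ) + 1 ≤ k := by exact_mod_cast hlt
    have hj0 : (0 : ℤ) ≤ j := Int.natCast_nonneg j
    nlinarith
  · omega
  · exfalso; have : (k : ℤ) + 1 ≤ j := by exact_mod_cast hlt
    have hk0 : (0 : ℤ) ≤ k := Int.natCast_nonneg k
    nlinarith

lemma fact3 {j k : ℕ} (hj : 1 ≤ j) (hk : 1 ≤ k) : j * (3 * j - 1) ≠ k * (3 * k + 1) := by
  intro h
  obtain ⟨t, rfl⟩ : ∃ t, j = t + 1 := ⟨j - 1, by omega⟩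
  rw [show 3 * (t + 1) - 1 = 3 * t + 2 by omega] at h
  zify at h
  have ht0 : (0 : ℤ) ≤ t := Int.natCast_nonneg t
  have hk1 : (1 : ℤ) ≤ k := by exact_mod_cast hk
  rcases lt_trichotomy (t + 1) k with hlt | heq | hlt
  · have : (t : ℤ) + 2 ≤ k := by exact_mod_cast hlt
    nlinarith
  · have : (t : ℤ) + 1 = k := by exact_mod_cast heq
    nlinarith
  · have : (k : ℤ) + 1 ≤ t + 1 := by exact_mod_cast hlt
    nlinarith

lemma exc_imp {i : ℕ} {S : Finset ℕ} (hS : S ∈ D i) (h : Exc S) :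
    ∃ k, 1 ≤ k ∧ (2 * i = k * (3 * k - 1) ∨ 2 * i = k * (3 * k + 1)) := by
  obtain ⟨k, hk1, hk | hk⟩ := h
  · refine ⟨k, hk1, Or.inl ?_⟩
    have := (mem_D.1 hS).2
    rw [hk] at this
    rw [← this, sum_exc1 hk1]
  · refine ⟨k, hk1, Or.inr ?_⟩
    have := (mem_D.1 hS).2
    rw [hk] at this
    rw [← this, sum_exc2 k]

lemma mem_D_props {i : ℕ} {S : Finset ℕ} (hi : 1 ≤ i) (hS : S ∈ D i) :
    0 ∉ S ∧ S.Nonempty := by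
  obtain ⟨h0, hsum⟩ := mem_D.1 hS
  refine ⟨h0, ?_⟩
  rcases S.eq_empty_or_nonempty with rfl | hne
  · simp at hsum; omega
  · exact hne

lemma sum_D_zero {i : ℕ} (hi : 1 ≤ i)
    (h : ¬ ∃ j, 2 * i = j * (3 * j - 1) ∨ 2 * i = j * (3 * j + 1)) :
    ∑ S ∈ D i, (-1 : ℤ) ^ S.card = 0 := by
  have hexc : ∀ S ∈ D i, ¬ Exc S := by
    intro S hS hE
    obtain ⟨k, _, hk⟩ := exc_imp hS hE
    exact h ⟨k, hk⟩
  apply Finset.sum_involution (fun S _ => g S)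
  · intro S hS
    obtain ⟨h0, hne⟩ := mem_D_props hi hS
    obtain ⟨_, _, hsign, _, _, _⟩ := key h0 hne (hexc S hS)
    rw [hsign]; ring
  · intro S hS _
    obtain ⟨h0, hne⟩ := mem_D_props hi hS
    exact (key h0 hne (hexc S hS)).2.2.2.2.2
  · intro S hS
    obtain ⟨h0, hne⟩ := mem_D_props hi hS
    obtain ⟨h0', hsum', _, _, _, _⟩ := key h0 hne (hexc S hS)
    rw [mem_D]
    exact ⟨h0', hsum'.trans (mem_D.1 hS).2⟩
  · intro S hS
    obtain ⟨h0, hne⟩ := mem_D_props hi hS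
    exact (key h0 hne (hexc S hS)).2.2.2.2.1

lemma sum_D_exc {i : ℕ} (hi : 1 ≤ i) {E : Finset ℕ} (hE : E ∈ D i) (hEexc : Exc E)
    (huniq : ∀ S ∈ D i, Exc S → S = E) :
    ∑ S ∈ D i, (-1 : ℤ) ^ S.card = (-1) ^ E.card := by
  have hsplit : ∑ S ∈ (D i).erase E, (-1 : ℤ) ^ S.card + (-1 : ℤ) ^ E.card
      = ∑ S ∈ D i, (-1 : ℤ) ^ S.card := Finset.sum_erase_add _ _ hE
  have hzero : ∑ S ∈ (D i).erase E, (-1 : ℤ) ^ S.card = 0 := by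
    have hexc : ∀ S ∈ (D i).erase E, ¬ Exc S := by
      intro S hS hE'
      have := huniq S (Finset.mem_of_mem_erase hS) hE'
      exact (Finset.mem_erase.1 hS).1 this
    apply Finset.sum_involution (fun S _ => g S)
    · intro S hS
      obtain ⟨h0, hne⟩ := mem_D_props hi (Finset.mem_of_mem_erase hS)
      obtain ⟨_, _, hsign, _, _, _⟩ := key h0 hne (hexc S hS)
      rw [hsign]; ring
    · intro S hS _
      obtain ⟨h0, hne⟩ := mem_D_props hi (Finset.mem_of_mem_erase hS)
      exact (key h0 hne (hexc S hS)).2.2.2.2.2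
    · intro S hS
      obtain ⟨h0, hne⟩ := mem_D_props hi (Finset.mem_of_mem_erase hS)
      obtain ⟨h0', hsum', _, hexc', _, _⟩ := key h0 hne (hexc S hS)
      rw [Finset.mem_erase, mem_D]
      refine ⟨fun hEq => hexc' (hEq ▸ hEexc), h0', hsum'.trans (mem_D.1 (Finset.mem_of_mem_erase hS)).2⟩
    · intro S hS
      obtain ⟨h0, hne⟩ := mem_D_props hi (Finset.mem_of_mem_erase hS)
      exact (key h0 hne (hexc S hS)).2.2.2.2.1
  omega

lemma sum_D_pent1 {i j : ℕ} (hi : 1 ≤ i) (hj : 1 ≤ j) (h : 2 * i = j * (3 * j - 1)) :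
    ∑ S ∈ D i, (-1 : ℤ) ^ S.card = (-1) ^ j := by
  set E := Finset.Icc j (2 * j - 1) with hEdef
  have hE : E ∈ D i := by
    rw [mem_D]
    constructor
    · rw [hEdef, Finset.mem_Icc]; omega
    · rw [hEdef]
      have := sum_exc1 hj
      omega
  have hcard : E.card = j := card_exc1 hj
  rw [← hcard]
  apply sum_D_exc hi hE ⟨j, hj, Or.inl rfl⟩
  intro S hS hSexc
  obtain ⟨k, hk1, hk | hk⟩ := hSexc
  · have hsum := (mem_D.1 hS).2
    rw [hk] at hsum ⊢
    have h2 : 2 * i = k * (3 * k - 1) := by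
      rw [← hsum, sum_exc1 hk1]
    have : k = j := fact1 (h2 ▸ h)
    rw [this]
  · have hsum := (mem_D.1 hS).2
    rw [hk] at hsum
    have h2 : 2 * i = k * (3 * k + 1) := by
      rw [← hsum, sum_exc2 k]
    exact absurd (h.symm.trans h2) (fact3 hj hk1)

lemma sum_D_pent2 {i j : ℕ} (hi : 1 ≤ i) (hj : 1 ≤ j) (h : 2 * i = j * (3 * j + 1)) :
    ∑ S ∈ D i, (-1 : ℤ) ^ S.card = (-1) ^ j := by
  set E := Finset.Icc (j + 1) (2 * j) with hEdef
  have hE : E ∈ D i := by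
    rw [mem_D]
    constructor
    · rw [hEdef, Finset.mem_Icc]; omega
    · rw [hEdef]
      have := sum_exc2 j
      omega
  have hcard : E.card = j := card_exc2 j
  rw [← hcard]
  apply sum_D_exc hi hE ⟨j, hj, Or.inr rfl⟩
  intro S hS hSexc
  obtain ⟨k, hk1, hk | hk⟩ := hSexc
  · have hsum := (mem_D.1 hS).2
    rw [hk] at hsum
    have h2 : 2 * i = k * (3 * k - 1) := by
      rw [← hsum, sum_exc1 hk1]
    exact absurd (h2.symm.trans h) (fact3 hk1 hj)
  · have hsum := (mem_D.1 hS).2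
    rw [hk] at hsum ⊢
    have h2 : 2 * i = k * (3 * k + 1) := by
      rw [← hsum, sum_exc2 k]
    have : k = j := fact2 (h2 ▸ h)
    rw [this]

lemma D_zero : D 0 = {∅} := by
  ext S
  rw [mem_D, Finset.mem_singleton]
  constructor
  · rintro ⟨h0, hsum⟩
    rw [Finset.sum_eq_zero_iff] at hsum
    ext x
    simp only [Finset.notMem_empty, iff_false]
    intro hx
    exact h0 (hsum x hx ▸ hx)
  · rintro rfl
    simp

end PNT

/-- The first `n+1` coefficients of `(q;q)_n` are given by Euler's pentagonal number
theorem: `a n i = (-1)^j` if `i = j(3j-1)/2` or `i = j(3j+1)/2` for some `j : ℕ`,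
and `a n i = 0` otherwise. -/
theorem stmt_0 (n : ℕ) (i : ℕ) (hi : i ≤ n) :
    (∀ j : ℕ, (2 * i = j * (3 * j - 1) ∨ 2 * i = j * (3 * j + 1)) → a n i = (-1) ^ j) ∧
    ((¬ ∃ j : ℕ, 2 * i = j * (3 * j - 1) ∨ 2 * i = j * (3 * j + 1)) → a n i = 0) := by
  constructor
  · rintro j (hj | hj)
    · rcases Nat.eq_zero_or_pos i with rfl | hi1
      · have hj0 : j = 0 := by
          rcases Nat.mul_eq_zero.1 hj.symm with h' | h' <;> omega
        rw [PNT.a_eq hi, PNT.D_zero, hj0]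
        simp
      · have hj1 : 1 ≤ j := by
          rcases Nat.eq_zero_or_pos j with rfl | h
          · simp at hj; omega
          · exact h
        rw [PNT.a_eq hi]
        exact PNT.sum_D_pent1 hi1 hj1 hj
    · rcases Nat.eq_zero_or_pos i with rfl | hi1
      · have hj0 : j = 0 := by
          rcases Nat.mul_eq_zero.1 hj.symm with h' | h' <;> omega
        rw [PNT.a_eq hi, PNT.D_zero, hj0]
        simp
      · have hj1 : 1 ≤ j := by
          rcases Nat.eq_zero_or_pos j with rfl | h
          · simp at hj; omega
          · exact h
        rw [PNT.a_eq hi]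
        exact PNT.sum_D_pent2 hi1 hj1 hj
  · intro h
    rcases Nat.eq_zero_or_pos i with rfl | hi1
    · exact absurd ⟨0, Or.inl (by simp)⟩ h
    · rw [PNT.a_eq hi]
      exact PNT.sum_D_zero hi1 h
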